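/- Let h : H → K be an expanding isomorphism between torsion-free subgroups K ⊆ H of a group G (i.e., ⋂_{n∈ℕ} hⁿ(H) = {e}) and F ⊆ P(G) an h-invariant left-invariant ideal. For any limit ordinal α and any family {Aₙ}_{n∈ω} of subsets of H with each Aₙ ∈ τ^{<α}(F), the union A = ⋃_{n∈ω} hⁿ(Aₙ) belongs to τ^α(F). -/

import Mathlib

open Pointwise

/-- A family of subsets of `G` is left-invariant if it is closed under left translations. -/
def LeftInvariant {G : Type} [Group G] (F : Set (Set G)) : Prop :=
  ∀ A ∈ F, ∀ x : G, x • A ∈ F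

/-- A family of subsets is lower if it is closed under taking subsets. -/
def Lower {G : Type} [Group G] (F : Set (Set G)) : Prop :=
  ∀ A B : Set G, A ⊆ B → B ∈ F → A ∈ F

/-- The transfinite iterates `τ^α(F)`. -/
noncomputable def tauIter {G : Type} [Group G] (F : Set (Set G)) : Ordinal → Set (Set G) :=
  Ordinal.lt_wf.fix fun α ih =>
    if α = 0 then F
    else {A | ∀ x y : G, x ≠ y → ∃ β, ∃ h : β < α, x • A ∩ y • A ∈ ih β h}

/-- The image `hⁿ(A) ⊆ G` of a set `A ⊆ H` under the `n`-th iterate of an injective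
endomorphism `φ` of the subgroup `H` (modelling an isomorphism `h : H → K` onto a
subgroup `K = φ(H) ⊆ H`). -/
def iterImg {G : Type} [Group G] {H : Subgroup G} (φ : H →* H) (n : ℕ) (A : Set G) : Set G :=
  Subtype.val '' ((⇑φ)^[n] '' (Subtype.val ⁻¹' A))

/-- Old Mathlib `Monoid.IsTorsionFree` (removed upstream), restated with its original meaning. -/
def Monoid.IsTorsionFree (G : Type*) [Monoid G] : Prop :=
  ∀ g : G, g ≠ 1 → ¬IsOfFinOrder g

section Aux

variable {G : Type} [Group G]

theorem tau_unfold (F : Set (Set G)) (α : Ordinal) :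
    tauIter F α = if α = 0 then F
      else {A | ∀ x y : G, x ≠ y → ∃ β, ∃ _ : β < α, x • A ∩ y • A ∈ tauIter F β} :=
  WellFounded.fix_eq _ _ _

theorem tau_zero (F : Set (Set G)) : tauIter F 0 = F := by
  rw [tau_unfold]; simp

theorem mem_tau_iff (F : Set (Set G)) {α : Ordinal} (hα : α ≠ 0) {A : Set G} :
    A ∈ tauIter F α ↔ ∀ x y : G, x ≠ y → ∃ β, β < α ∧ x • A ∩ y • A ∈ tauIter F β := by
  conv_lhs => rw [tau_unfold, if_neg hα]
  simp only [Set.mem_setOf_eq, exists_prop]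

theorem tau_lower (F : Set (Set G)) (hlo : Lower F) :
    ∀ β : Ordinal, ∀ {A B : Set G}, A ⊆ B → B ∈ tauIter F β → A ∈ tauIter F β := by
  intro β
  induction β using Ordinal.induction with
  | _ β IH =>
    intro A B hAB hB
    by_cases hβ : β = 0
    · subst hβ; rw [tau_zero] at *; exact hlo A B hAB hB
    · rw [mem_tau_iff F hβ] at *
      intro x y hxy
      obtain ⟨γ, hγ, hm⟩ := hB x y hxy
      exact ⟨γ, hγ, IH γ hγ (Set.inter_subset_inter (Set.smul_set_mono hAB) (Set.smul_set_mono hAB)) hm⟩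

theorem tau_smul (F : Set (Set G)) (hli : LeftInvariant F) {β : Ordinal} (g : G) {A : Set G}
    (hA : A ∈ tauIter F β) : g • A ∈ tauIter F β := by
  by_cases hβ : β = 0
  · subst hβ; rw [tau_zero] at *; exact hli A hA g
  · rw [mem_tau_iff F hβ] at *
    intro x y hxy
    obtain ⟨γ, hγ, hm⟩ := hA (x * g) (y * g) (by intro h; exact hxy (mul_right_cancel h))
    refine ⟨γ, hγ, ?_⟩
    rw [smul_smul, smul_smul]
    exact hm

theorem tau_mono (F : Set (Set G)) (hli : LeftInvariant F) (hlo : Lower F) {β γ : Ordinal}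
    (h : β ≤ γ) : tauIter F β ⊆ tauIter F γ := by
  rcases eq_or_lt_of_le h with rfl | hlt
  · exact le_refl _
  · intro A hA
    have hγ : γ ≠ 0 := by
      intro h0; subst h0; exact absurd hlt (by simp)
    rw [mem_tau_iff F hγ]
    intro x y hxy
    by_cases hβ : β = 0
    · subst hβ; rw [tau_zero] at hA
      exact ⟨0, pos_iff_ne_zero.2 hγ, by
        rw [tau_zero]
        exact hlo _ (x • A) Set.inter_subset_left (hli A hA x)⟩
    · obtain ⟨δ, hδ, hm⟩ := (mem_tau_iff F hβ).1 hA x y hxy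
      exact ⟨δ, hδ.trans hlt, hm⟩

theorem tau_empty_F (F : Set (Set G)) (hlo : Lower F) :
    ∀ β : Ordinal, ∀ {A : Set G}, A ∈ tauIter F β → ∀ {x y : G}, x ≠ y → ∅ ∈ F := by
  intro β
  induction β using Ordinal.induction with
  | _ β IH =>
    intro A hA x y hxy
    by_cases hβ : β = 0
    · subst hβ; rw [tau_zero] at hA; exact hlo ∅ A (Set.empty_subset A) hA
    · obtain ⟨γ, hγ, hm⟩ := (mem_tau_iff F hβ).1 hA x y hxy
      exact IH γ hγ hm hxy

theorem add_nat_lt_limit {α β : Ordinal} (hα : Order.IsSuccLimit α) (h : β < α) (n : ℕ) : β + n < α := by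
  induction n with
  | zero => simpa using h
  | succ n ih =>
    have : (β + n) + 1 < α := by
      rw [Ordinal.add_one_eq_succ]
      exact hα.succ_lt ih
    calc β + (n + 1 : ℕ) = β + ((n : Ordinal) + 1) := by push_cast; ring_nf
    _ = (β + n) + 1 := by rw [add_assoc]
    _ < α := this

end Aux
section Aux2
variable {G : Type} [Group G]

omit [Group G] in
theorem F_fin_union (F : Set (Set G)) (hadd : ∀ A B : Set G, A ∈ F → B ∈ F → A ∪ B ∈ F)
    (hF0 : ∅ ∈ F) {ι : Type} [Fintype ι] (C : ι → Set G) (h : ∀ i, C i ∈ F) :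
    (⋃ i, C i) ∈ F := by
  classical
  have key : ∀ s : Finset ι, (⋃ i ∈ s, C i) ∈ F := by
    intro s
    induction s using Finset.induction_on with
    | empty => simpa using hF0
    | insert _ _ hnot ih =>
      rw [Finset.set_biUnion_insert]
      exact hadd _ _ (h _) ih
  have : (⋃ i, C i) = ⋃ i ∈ (Finset.univ : Finset ι), C i := by simp
  rw [this]; exact key _

theorem smul_iInter₂ (g : G) (T : Finset G) (Sf : G → Set G) :
    g • (⋂ t ∈ T, Sf t) = ⋂ t ∈ T, g • Sf t := by
  ext ξ
  simp only [Set.mem_smul_set_iff_inv_smul_mem, Set.mem_iInter]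

theorem biInter_pair [DecidableEq G] (x y : G) (S : Set G) :
    ⋂ t ∈ ({x, y} : Finset G), t • S = x • S ∩ y • S := by
  ext ξ
  simp only [Set.mem_iInter, Set.mem_inter_iff, Finset.mem_insert, Finset.mem_singleton]
  constructor
  · intro h; exact ⟨h x (Or.inl rfl), h y (Or.inr rfl)⟩
  · rintro ⟨h1, h2⟩ t (rfl | rfl) <;> assumption

theorem biInter_union_image [DecidableEq G] (u v : G) (T : Finset G) (S : Set G) :
    ⋂ t ∈ (T.image (u * ·) ∪ T.image (v * ·)), t • S
      = u • (⋂ t ∈ T, t • S) ∩ v • (⋂ t ∈ T, t • S) := by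
  rw [smul_iInter₂, smul_iInter₂]
  ext ξ
  simp only [Set.mem_iInter, Set.mem_inter_iff, Finset.mem_union, Finset.mem_image]
  constructor
  · intro h
    constructor
    · intro t ht; rw [smul_smul]
      exact h _ (Or.inl ⟨t, ht, rfl⟩)
    · intro t ht; rw [smul_smul]
      exact h _ (Or.inr ⟨t, ht, rfl⟩)
  · rintro ⟨h1, h2⟩ s (⟨t, ht, rfl⟩ | ⟨t, ht, rfl⟩)
    · rw [← smul_smul]; exact h1 t ht
    · rw [← smul_smul]; exact h2 t ht

end Aux2

section Card
variable {G : Type} [Group G] {H : Subgroup G}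

theorem cardgrow (htf : Monoid.IsTorsionFree H) (S : Set G) (g₀ : G)
    (hS : S ⊆ g₀ • (H : Set G)) {u v : G} (huv : u ≠ v) (T : Finset G) (hT : T.Nonempty)
    [DecidableEq G]
    (hne : (⋂ t ∈ (T.image (u * ·) ∪ T.image (v * ·)), t • S).Nonempty)
    (hcol : (T.image (u * ·) ∪ T.image (v * ·)).card ≤ T.card) : False := by
  set T' := T.image (u * ·) ∪ T.image (v * ·) with hT'
  have hc1 : (T.image (u * ·)).card = T.card :=
    Finset.card_image_of_injective T (mul_right_injective u)
  have hc2 : (T.image (v * ·)).card = T.card :=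
    Finset.card_image_of_injective T (mul_right_injective v)
  have hsub1 : T.image (u * ·) ⊆ T' := Finset.subset_union_left
  have hsub2 : T.image (v * ·) ⊆ T' := Finset.subset_union_right
  have he1 : T.image (u * ·) = T' :=
    Finset.eq_of_subset_of_card_le hsub1 (by omega)
  have he2 : T.image (v * ·) = T' :=
    Finset.eq_of_subset_of_card_le hsub2 (by omega)
  -- w := v⁻¹ * u
  set w := v⁻¹ * u with hw
  have hw1 : w ≠ 1 := by
    intro h
    rw [hw] at h
    exact huv (inv_mul_eq_one.1 h).symm
  have himgw : T.image (w * ·) = T := by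
    have h3 : (T.image (u * ·)).image (v⁻¹ * ·) = T.image (w * ·) := by
      rw [Finset.image_image]
      apply Finset.image_congr
      intro a _; simp [hw, mul_assoc]
    have h4 : (T.image (v * ·)).image (v⁻¹ * ·) = T := by
      rw [Finset.image_image]
      have : ((v⁻¹ * ·) ∘ (v * ·)) = id := by funext a; simp [mul_assoc]
      rw [this, Finset.image_id]
    rw [← h3, he1, ← he2, h4]
  have himg : ∀ j : ℕ, T.image ((w ^ j) * ·) = T := by
    intro j
    induction j with
    | zero => simp [Finset.image_id]
    | succ j ih =>
      have : T.image ((w ^ (j+1)) * ·) = (T.image (w * ·)).image ((w ^ j) * ·) := by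
        rw [Finset.image_image]
        apply Finset.image_congr
        intro a _; simp [pow_succ, mul_assoc]
      rw [this, himgw, ih]
  obtain ⟨t₀, ht₀⟩ := hT
  have horbit : ∀ j : ℕ, w ^ j * t₀ ∈ T := by
    intro j
    rw [← himg j]
    exact Finset.mem_image_of_mem _ ht₀
  -- pigeonhole: w has finite order
  have hfin : ∃ r : ℕ, 0 < r ∧ w ^ r = 1 := by
    have : ∃ j₁ j₂ : ℕ, j₁ ≠ j₂ ∧ (⟨w ^ j₁ * t₀, horbit j₁⟩ : {x // x ∈ T}) = ⟨w ^ j₂ * t₀, horbit j₂⟩ := by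
      exact Finite.exists_ne_map_eq_of_infinite _
    obtain ⟨j₁, j₂, hne', heq⟩ := this
    have heq' : w ^ j₁ = w ^ j₂ := by
      have := congrArg Subtype.val heq
      simp only at this
      exact mul_right_cancel this
    rcases Nat.lt_or_ge j₁ j₂ with h | h
    · refine ⟨j₂ - j₁, by omega, ?_⟩
      have : w ^ (j₂ - j₁) * w ^ j₁ = 1 * w ^ j₁ := by
        rw [← pow_add, Nat.sub_add_cancel (le_of_lt h), one_mul, heq']
      exact mul_right_cancel this
    · have hlt : j₂ < j₁ := by omega
      refine ⟨j₁ - j₂, by omega, ?_⟩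
      have : w ^ (j₁ - j₂) * w ^ j₂ = 1 * w ^ j₂ := by
        rw [← pow_add, Nat.sub_add_cancel (le_of_lt hlt), one_mul, heq']
      exact mul_right_cancel this
  obtain ⟨r, hr, hwr⟩ := hfin
  -- nonemptiness gives a conjugate of w inside H
  obtain ⟨ξ, hξ⟩ := hne
  rw [Set.mem_iInter] at hξ
  have hmem : ∀ s : G, s ∈ T' → ξ ∈ s • S := by
    intro s hs
    have := hξ s
    rw [Set.mem_iInter] at this
    exact this hs
  have hu : ξ ∈ (u * t₀) • S := hmem _ (hsub1 (Finset.mem_image_of_mem _ ht₀))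
  have hv : ξ ∈ (v * t₀) • S := hmem _ (hsub2 (Finset.mem_image_of_mem _ ht₀))
  rw [Set.mem_smul_set_iff_inv_smul_mem] at hu hv
  have hu' := hS hu
  have hv' := hS hv
  rw [Set.mem_smul_set_iff_inv_smul_mem] at hu' hv'
  set h₁ := g₀⁻¹ • (u * t₀)⁻¹ • ξ with hh₁
  set h₂ := g₀⁻¹ • (v * t₀)⁻¹ • ξ with hh₂
  have hm₁ : h₁ ∈ H := hu'
  have hm₂ : h₂ ∈ H := hv'
  have key : h₂ * h₁⁻¹ = (t₀ * g₀)⁻¹ * w * (t₀ * g₀) := by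
    rw [hh₁, hh₂, hw]
    simp only [smul_eq_mul]
    group
  have hηH : (t₀ * g₀)⁻¹ * w * (t₀ * g₀) ∈ H := key ▸ H.mul_mem hm₂ (H.inv_mem hm₁)
  have hη1 : (t₀ * g₀)⁻¹ * w * (t₀ * g₀) ≠ 1 := by
    intro h
    apply hw1
    have : w = (t₀ * g₀) * ((t₀ * g₀)⁻¹ * w * (t₀ * g₀)) * (t₀ * g₀)⁻¹ := by group
    rw [this, h]; group
  have hηr : ((t₀ * g₀)⁻¹ * w * (t₀ * g₀)) ^ r = 1 := by
    have hconj : ((t₀ * g₀)⁻¹ * w * ((t₀ * g₀)⁻¹)⁻¹) ^ r = (t₀ * g₀)⁻¹ * w ^ r * ((t₀ * g₀)⁻¹)⁻¹ :=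
      conj_pow
    rw [inv_inv] at hconj
    rw [hconj, hwr]; group
  have : ¬ IsOfFinOrder (⟨_, hηH⟩ : H) := htf _ (by
    intro h
    exact hη1 (by simpa using congrArg Subtype.val h))
  apply this
  rw [isOfFinOrder_iff_pow_eq_one]
  exact ⟨r, hr, by ext; simpa using hηr⟩

end Card

section Climb
variable {G : Type} [Group G] {H : Subgroup G}

theorem climb (F : Set (Set G)) (hlo : Lower F) (hli : LeftInvariant F) (hF0 : ∅ ∈ F)
    (htf : Monoid.IsTorsionFree H) (S : Set G) (g₀ : G) (hS : S ⊆ g₀ • (H : Set G))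
    (k : ℕ) (hk : 1 ≤ k) (LVL : Ordinal)
    (hbot : ∀ T : Finset G, T.Nonempty → k + 1 ≤ T.card → T.card ≤ 2 * k →
      (⋂ t ∈ T, t • S) ∈ tauIter F LVL) :
    ∀ (d : ℕ) (T : Finset G), 2 ≤ T.card → T.card ≤ 2 * k → k + 1 ≤ T.card + d →
      (⋂ t ∈ T, t • S) ∈ tauIter F (LVL + d) := by
  intro d
  induction d with
  | zero =>
    intro T hT2 hT2k hTd
    have := hbot T (Finset.card_pos.1 (by omega)) (by omega) hT2k
    simpa using this
  | succ d IH =>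
    intro T hT2 hT2k hTd
    classical
    by_cases hTk : k + 1 ≤ T.card
    · exact tau_mono F hli hlo le_self_add
        (hbot T (Finset.card_pos.1 (by omega)) hTk hT2k)
    · have hpos : (0 : Ordinal) < LVL + (d + 1 : ℕ) := by
        refine lt_of_lt_of_le ?_ le_add_self
        exact_mod_cast Nat.succ_pos d
      rw [mem_tau_iff F hpos.ne']
      intro u v huv
      set V := ⋂ t ∈ T, t • S with hV
      by_cases hW : (u • V ∩ v • V) = ∅
      · exact ⟨0, hpos, by rw [hW, tau_zero]; exact hF0⟩
      · set T' := T.image (u * ·) ∪ T.image (v * ·) with hT'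
        have hVT' : u • V ∩ v • V = ⋂ t ∈ T', t • S := (biInter_union_image u v T S).symm
        have hne : (⋂ t ∈ T', t • S).Nonempty := by
          rw [← hVT']; exact Set.nonempty_iff_ne_empty.2 hW
        have hTn : T.Nonempty := Finset.card_pos.1 (by omega)
        have hgrow : T.card < T'.card := by
          by_contra hcol
          push_neg at hcol
          exact cardgrow htf S g₀ hS huv T hTn hne hcol
        have hble : T'.card ≤ 2 * T.card := by
          calc T'.card ≤ (T.image (u * ·)).card + (T.image (v * ·)).card :=
                Finset.card_union_le _ _
          _ ≤ 2 * T.card := by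
                rw [Finset.card_image_of_injective T (mul_right_injective u),
                  Finset.card_image_of_injective T (mul_right_injective v)]
                omega
        have h1 : 2 ≤ T'.card := by omega
        have h2 : T'.card ≤ 2 * k := by omega
        have h3 : k + 1 ≤ T'.card + d := by omega
        refine ⟨LVL + d, ?_, ?_⟩
        · have : (d : Ordinal) < ((d + 1 : ℕ) : Ordinal) := by exact_mod_cast Nat.lt_succ_self d
          exact (add_lt_add_iff_left LVL).2 this
        · rw [hVT']
          exact IH T' h1 h2 h3

end Climb

section Pieces
variable {G : Type} [Group G] {H : Subgroup G}

theorem pieces (F : Set (Set G)) (hli : LeftInvariant F) (hlo : Lower F) {m : Ordinal}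
    (hm : m ≠ 0) {ι : Type} [Fintype ι] (C : ι → Set G) (g₀ : G)
    (hcos : ∀ i, C i ⊆ g₀ • (H : Set G))
    (hlev : ∀ i, ∃ c, c ≤ m ∧ C i ∈ tauIter F c)
    (T : Finset G) (hT : T.Nonempty) (hTcard : Fintype.card ι < T.card) :
    ∃ g₁ : G,
      ((⋂ t ∈ T, t • (⋃ i, C i)) ⊆ ⋃ f : {x // x ∈ T} → ι, ⋂ t : {x // x ∈ T}, ((t : G) • C (f t)))
      ∧ (∀ f : {x // x ∈ T} → ι, (⋂ t : {x // x ∈ T}, ((t : G) • C (f t))) ⊆ g₁ • (H : Set G))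
      ∧ (∀ f : {x // x ∈ T} → ι, ∃ a, a < m ∧ (⋂ t : {x // x ∈ T}, ((t : G) • C (f t))) ∈ tauIter F a) := by
  classical
  set t₀ : {x // x ∈ T} := ⟨hT.choose, hT.choose_spec⟩ with ht₀
  refine ⟨(t₀ : G) * g₀, ?_, ?_, ?_⟩
  · intro ξ hξ
    rw [Set.mem_iInter₂] at hξ
    have hch : ∀ t : {x // x ∈ T}, ∃ i, ξ ∈ (t : G) • C i := by
      intro t
      have := hξ t t.2
      rw [Set.smul_set_iUnion] at this
      exact Set.mem_iUnion.1 this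
    choose f hf using hch
    exact Set.mem_iUnion.2 ⟨f, Set.mem_iInter.2 hf⟩
  · intro f
    refine (Set.iInter_subset _ t₀).trans ?_
    refine (Set.smul_set_mono (hcos (f t₀))).trans ?_
    rw [smul_smul]
  · intro f
    have hcard : Fintype.card ι < Fintype.card {x // x ∈ T} := by rwa [Fintype.card_coe]
    obtain ⟨t₁, t₂, hne, hfeq⟩ := Fintype.exists_ne_map_eq_of_card_lt f hcard
    obtain ⟨c, hcm, hC⟩ := hlev (f t₁)
    have hsub : (⋂ t : {x // x ∈ T}, ((t : G) • C (f t)))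
        ⊆ (t₁ : G) • C (f t₁) ∩ (t₂ : G) • C (f t₁) := by
      intro ξ hξ
      rw [Set.mem_iInter] at hξ
      refine ⟨hξ t₁, ?_⟩
      have := hξ t₂
      rwa [← hfeq] at this
    by_cases hc : c = 0
    · subst hc
      rw [tau_zero] at hC
      refine ⟨0, pos_iff_ne_zero.2 hm, ?_⟩
      rw [tau_zero]
      exact hlo _ _ (hsub.trans Set.inter_subset_left) (hli _ hC _)
    · have hne' : (t₁ : G) ≠ (t₂ : G) := fun h => hne (Subtype.ext h)
      obtain ⟨γ, hγ, hmem⟩ := (mem_tau_iff F hc).1 hC (t₁ : G) (t₂ : G) hne'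
      exact ⟨γ, lt_of_lt_of_le hγ hcm, tau_lower F hlo γ hsub hmem⟩

end Pieces

section UnionMem
variable {G : Type} [Group G] {H : Subgroup G}

theorem unionMem (F : Set (Set G)) (hli : LeftInvariant F) (hlo : Lower F)
    (hadd : ∀ A B : Set G, A ∈ F → B ∈ F → A ∪ B ∈ F) (hF0 : ∅ ∈ F)
    (htf : Monoid.IsTorsionFree H) :
    ∀ m : Ordinal, ∀ k : ℕ, 1 ≤ k → ∃ n : ℕ, ∀ (ι : Type) (_ : Fintype ι) (C : ι → Set G)
      (g₀ : G), Fintype.card ι ≤ k → (∀ i, C i ⊆ g₀ • (H : Set G)) →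
      (∀ i, ∃ c, c ≤ m ∧ C i ∈ tauIter F c) → (⋃ i, C i) ∈ tauIter F (m + n) := by
  intro m
  induction m using Ordinal.induction with
  | _ m IH =>
    intro k hk
    rcases Ordinal.zero_or_succ_or_isSuccLimit m with hm0 | ⟨m₀, hms⟩ | hlim
    · -- m = 0
      subst hm0
      refine ⟨0, ?_⟩
      intro ι instF C g₀ _ _ hlev
      have hCF : ∀ i, C i ∈ F := by
        intro i
        obtain ⟨c, hc, h⟩ := hlev i
        rw [nonpos_iff_eq_zero] at hc
        subst hc
        rwa [tau_zero] at h
      have h0 : ((0 : Ordinal) + ((0 : ℕ) : Ordinal)) = 0 := by simp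
      rw [h0, tau_zero]
      exact F_fin_union F hadd hF0 C hCF
    · -- successor
      replace hms := hms.symm
      have hm₀lt : m₀ < m := by rw [hms]; exact Order.lt_succ m₀
      have hmne : m ≠ 0 := by rw [hms]; exact (Order.succ_ne_bot m₀)
      obtain ⟨n₀, hn₀⟩ := IH m₀ hm₀lt (k ^ (2 * k)) (Nat.one_le_pow _ _ hk)
      refine ⟨n₀ + k, ?_⟩
      intro ι instF C g₀ hcard hcos hlev
      classical
      by_cases hι : Nonempty ι
      case neg =>
        haveI := not_nonempty_iff.1 hι
        rw [Set.iUnion_of_empty C]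
        exact tau_mono F hli hlo zero_le' (by rw [tau_zero]; exact hF0)
      case pos =>
        haveI := hι
        set S := ⋃ i, C i with hSdef
        have hScos : S ⊆ g₀ • (H : Set G) := Set.iUnion_subset hcos
        have hbot : ∀ T : Finset G, T.Nonempty → k + 1 ≤ T.card → T.card ≤ 2 * k →
            (⋂ t ∈ T, t • S) ∈ tauIter F (m₀ + n₀) := by
          intro T hT hTc hT2k
          have hTcard : Fintype.card ι < T.card := by omega
          obtain ⟨g₁, hcover, hcos', hlev'⟩ := pieces F hli hlo hmne C g₀ hcos hlev T hT hTcard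
          refine tau_lower F hlo _ hcover ?_
          refine hn₀ ({x // x ∈ T} → ι) inferInstance _ g₁ ?_ hcos' ?_
          · calc Fintype.card ({x // x ∈ T} → ι)
                = Fintype.card ι ^ Fintype.card {x // x ∈ T} := Fintype.card_fun
            _ = Fintype.card ι ^ T.card := by rw [Fintype.card_coe]
            _ ≤ k ^ T.card := Nat.pow_le_pow_left hcard _
            _ ≤ k ^ (2 * k) := Nat.pow_le_pow_right hk hT2k
          · intro f
            obtain ⟨a, ham, hmem⟩ := hlev' f
            refine ⟨a, ?_, hmem⟩
            rw [hms] at ham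
            exact Order.lt_succ_iff.1 ham
        have hclimb := climb F hlo hli hF0 htf S g₀ hScos k hk (m₀ + n₀) hbot
        have hSk : S ∈ tauIter F ((m₀ + n₀) + k) := by
          have hpos : (0 : Ordinal) < (m₀ + n₀) + (k : Ordinal) := by
            refine lt_of_lt_of_le ?_ le_add_self
            exact_mod_cast hk
          rw [mem_tau_iff F hpos.ne']
          intro x y hxy
          refine ⟨(m₀ + n₀) + ((k - 1 : ℕ) : Ordinal), ?_, ?_⟩
          · exact (add_lt_add_iff_left _).2 (by exact_mod_cast Nat.sub_lt hk Nat.one_pos)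
          · rw [← biInter_pair x y S]
            refine hclimb (k - 1) {x, y} ?_ ?_ ?_
            · rw [Finset.card_pair hxy]
            · rw [Finset.card_pair hxy]; omega
            · rw [Finset.card_pair hxy]; omega
        refine tau_mono F hli hlo ?_ hSk
        rw [hms, ← Ordinal.add_one_eq_succ]
        calc (m₀ + (n₀ : Ordinal)) + (k : Ordinal) = m₀ + ((n₀ : Ordinal) + k) := by
              rw [add_assoc]
        _ ≤ m₀ + (1 + ((n₀ : Ordinal) + k)) := by
              exact add_le_add_right le_add_self m₀
        _ = (m₀ + 1) + ((n₀ + k : ℕ) : Ordinal) := by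
              push_cast
              rw [add_assoc]
    · -- limit
      refine ⟨k, ?_⟩
      intro ι instF C g₀ hcard hcos hlev
      classical
      by_cases hι : Nonempty ι
      case neg =>
        haveI := not_nonempty_iff.1 hι
        rw [Set.iUnion_of_empty C]
        exact tau_mono F hli hlo zero_le' (by rw [tau_zero]; exact hF0)
      case pos =>
        haveI := hι
        set S := ⋃ i, C i with hSdef
        have hScos : S ⊆ g₀ • (H : Set G) := Set.iUnion_subset hcos
        have hbot : ∀ T : Finset G, T.Nonempty → k + 1 ≤ T.card → T.card ≤ 2 * k →
            (⋂ t ∈ T, t • S) ∈ tauIter F m := by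
          intro T hT hTc hT2k
          have hTcard : Fintype.card ι < T.card := by omega
          obtain ⟨g₁, hcover, hcos', hlev'⟩ :=
            pieces F hli hlo hlim.pos.ne' C g₀ hcos hlev T hT hTcard
          choose a ha hmem using hlev'
          have hsup : Finset.univ.sup a < m :=
            Finset.sup_lt_iff hlim.pos |>.2 (fun f _ => ha f)
          haveI : Nonempty ({x // x ∈ T} → ι) := ⟨fun _ => Classical.arbitrary ι⟩
          obtain ⟨ns, hns⟩ := IH (Finset.univ.sup a) hsup
            (Fintype.card ({x // x ∈ T} → ι)) Fintype.card_pos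
          have hmemU := hns ({x // x ∈ T} → ι) inferInstance _ g₁ (le_refl _) hcos'
            (fun f => ⟨a f, Finset.le_sup (Finset.mem_univ f), hmem f⟩)
          refine tau_lower F hlo _ hcover (tau_mono F hli hlo ?_ hmemU)
          exact (add_nat_lt_limit hlim hsup ns).le
        have hclimb := climb F hlo hli hF0 htf S g₀ hScos k hk m hbot
        have hSk : S ∈ tauIter F (m + k) := by
          have hpos : (0 : Ordinal) < m + (k : Ordinal) :=
            lt_of_lt_of_le hlim.pos le_self_add
          rw [mem_tau_iff F hpos.ne']
          intro x y hxy
          refine ⟨m + ((k - 1 : ℕ) : Ordinal), ?_, ?_⟩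
          · exact (add_lt_add_iff_left _).2 (by exact_mod_cast Nat.sub_lt hk Nat.one_pos)
          · rw [← biInter_pair x y S]
            refine hclimb (k - 1) {x, y} ?_ ?_ ?_
            · rw [Finset.card_pair hxy]
            · rw [Finset.card_pair hxy]; omega
            · rw [Finset.card_pair hxy]; omega
        exact hSk

end UnionMem

section IterImg
variable {G : Type} [Group G] {H : Subgroup G}

theorem iterImg_subset (φ : H →* H) (n : ℕ) (A : Set G) : iterImg φ n A ⊆ (H : Set G) := by
  rintro g ⟨t, _, rfl⟩
  exact t.2

theorem iterImg_zero (φ : H →* H) {A : Set G} (hA : A ⊆ (H : Set G)) : iterImg φ 0 A = A := by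
  unfold iterImg
  simp only [Function.iterate_zero, Set.image_id]
  ext g
  constructor
  · rintro ⟨t, ht, rfl⟩; exact ht
  · intro hg; exact ⟨⟨g, hA hg⟩, hg, rfl⟩

theorem iterImg_succ (φ : H →* H) (n : ℕ) (A : Set G) :
    iterImg φ (n + 1) A = iterImg φ 1 (iterImg φ n A) := by
  unfold iterImg
  rw [Function.iterate_one, Set.preimage_image_eq _ Subtype.coe_injective,
    Function.iterate_succ', Set.image_comp]

theorem mem_iterImg_one (φ : H →* H) {A : Set G} {g : G} :
    g ∈ iterImg φ 1 A ↔ ∃ t : H, (t : G) ∈ A ∧ g = ((φ t : H) : G) := by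
  unfold iterImg
  rw [Function.iterate_one]
  constructor
  · rintro ⟨u, ⟨t, ht, rfl⟩, rfl⟩; exact ⟨t, ht, rfl⟩
  · rintro ⟨t, ht, rfl⟩; exact ⟨φ t, ⟨t, ht, rfl⟩, rfl⟩

theorem iterImg_inter (φ : H →* H) (hinj : Function.Injective φ) (S S' : Set G) :
    iterImg φ 1 (S ∩ S') = iterImg φ 1 S ∩ iterImg φ 1 S' := by
  unfold iterImg
  rw [Function.iterate_one, Set.preimage_inter, Set.image_inter hinj,
    Set.image_inter Subtype.coe_injective]

theorem iterImg_smul (φ : H →* H) (c : H) (S : Set G) :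
    iterImg φ 1 ((c : G) • S) = ((φ c : H) : G) • iterImg φ 1 S := by
  ext g
  rw [mem_iterImg_one]
  constructor
  · rintro ⟨t, ht, rfl⟩
    have ht' : ((c⁻¹ * t : H) : G) ∈ S := by
      rw [Set.mem_smul_set_iff_inv_smul_mem, smul_eq_mul] at ht
      simpa using ht
    refine ⟨((φ (c⁻¹ * t) : H) : G), ?_, ?_⟩
    · rw [mem_iterImg_one]; exact ⟨c⁻¹ * t, ht', rfl⟩
    · simp only [smul_eq_mul, ← Subgroup.coe_mul, ← map_mul, mul_inv_cancel_left]
  · rintro ⟨w, hw, rfl⟩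
    rw [mem_iterImg_one] at hw
    obtain ⟨t, ht, rfl⟩ := hw
    refine ⟨c * t, ?_, ?_⟩
    · rw [Set.mem_smul_set_iff_inv_smul_mem, smul_eq_mul]
      simpa using ht
    · simp only [smul_eq_mul, ← Subgroup.coe_mul, ← map_mul]

theorem tau_iterImg (F : Set (Set G)) (hli : LeftInvariant F) (hlo : Lower F) (hF0 : ∅ ∈ F)
    (φ : H →* H) (hinj : Function.Injective φ)
    (hinv : ∀ A : Set G, A ⊆ (H : Set G) → (A ∈ F ↔ iterImg φ 1 A ∈ F)) :
    ∀ β : Ordinal, ∀ {A : Set G}, A ⊆ (H : Set G) → A ∈ tauIter F β →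
      iterImg φ 1 A ∈ tauIter F β := by
  intro β
  induction β using Ordinal.induction with
  | _ β IH =>
    intro A hAH hA
    by_cases hβ : β = 0
    · subst hβ
      rw [tau_zero] at *
      exact (hinv A hAH).1 hA
    · rw [mem_tau_iff F hβ]
      intro x y hxy
      by_cases hE : x • iterImg φ 1 A ∩ y • iterImg φ 1 A = ∅
      · exact ⟨0, pos_iff_ne_zero.2 hβ, by rw [hE, tau_zero]; exact hF0⟩
      · obtain ⟨ξ, hξx, hξy⟩ := Set.nonempty_iff_ne_empty.2 hE
        obtain ⟨w, hw, rfl⟩ := hξx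
        rw [mem_iterImg_one] at hw
        obtain ⟨a, ha, rfl⟩ := hw
        obtain ⟨w', hw', heq⟩ := hξy
        rw [mem_iterImg_one] at hw'
        obtain ⟨b, hb, rfl⟩ := hw'
        set c := a * b⁻¹ with hc
        simp only [smul_eq_mul] at heq
        have hzc : x⁻¹ * y = ((φ c : H) : G) := by
          have h1 : x⁻¹ * (y * ((φ b : H) : G)) = ((φ a : H) : G) := by
            rw [heq]; group
          have h2 : x⁻¹ * y = ((φ a : H) : G) * ((φ b : H) : G)⁻¹ := by
            rw [← h1]; group
          rw [h2, hc, map_mul, map_inv]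
          push_cast
          rfl
        have hc1 : c ≠ 1 := by
          intro h
          apply hxy
          rw [h, map_one] at hzc
          have : x⁻¹ * y = 1 := by simpa using hzc
          exact (inv_mul_eq_one.1 this)
        have hc1' : (1 : G) ≠ ((c : H) : G) := by
          intro h
          apply hc1
          have : ((c : H) : G) = ((1 : H) : G) := by simpa using h.symm
          exact_mod_cast Subtype.coe_injective this
        obtain ⟨γ, hγ, hD⟩ := (mem_tau_iff F hβ).1 hA 1 ((c : H) : G) hc1'
        rw [one_smul] at hD
        have hDsub : A ∩ ((c : H) : G) • A ⊆ (H : Set G) := fun g hg => hAH hg.1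
        have himg := IH γ hγ hDsub hD
        have himg' := tau_smul F hli x himg
        refine ⟨γ, hγ, ?_⟩
        have hEq : x • iterImg φ 1 (A ∩ ((c : H) : G) • A)
            = x • iterImg φ 1 A ∩ y • iterImg φ 1 A := by
          rw [iterImg_inter φ hinj, iterImg_smul, Set.smul_set_inter]
          congr 1
          rw [smul_smul]
          congr 1
          rw [← hzc, mul_inv_cancel_left]
        rwa [hEq] at himg'

theorem tau_iterImg_n (F : Set (Set G)) (hli : LeftInvariant F) (hlo : Lower F) (hF0 : ∅ ∈ F)
    (φ : H →* H) (hinj : Function.Injective φ)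
    (hinv : ∀ A : Set G, A ⊆ (H : Set G) → (A ∈ F ↔ iterImg φ 1 A ∈ F))
    (n : ℕ) {c : Ordinal} {A : Set G} (hAH : A ⊆ (H : Set G)) (hA : A ∈ tauIter F c) :
    iterImg φ n A ∈ tauIter F c := by
  induction n with
  | zero => rwa [iterImg_zero φ hAH]
  | succ n ih =>
    rw [iterImg_succ]
    exact tau_iterImg F hli hlo hF0 φ hinj hinv c (iterImg_subset φ n A) ih

theorem iterate_map_mul_inv (φ : H →* H) (N : ℕ) (a b : H) :
    (⇑φ)^[N] (a * b⁻¹) = (⇑φ)^[N] a * ((⇑φ)^[N] b)⁻¹ := by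
  induction N with
  | zero => simp
  | succ N ih =>
    rw [Function.iterate_succ_apply', Function.iterate_succ_apply',
      Function.iterate_succ_apply', ih, map_mul, map_inv]

theorem smul_coe_of_mem {z : G} (hz : z ∈ H) : z • (H : Set G) = (H : Set G) := by
  ext g
  rw [Set.mem_smul_set_iff_inv_smul_mem, smul_eq_mul]
  constructor
  · intro h
    have := H.mul_mem hz h
    simpa using this
  · intro h
    exact H.mul_mem (H.inv_mem hz) h

end IterImg

theorem stmt_13 {G : Type} [Group G] {H : Subgroup G} (φ : H →* H)
    (hinj : Function.Injective φ) (htf : Monoid.IsTorsionFree H)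
    (hexp : ∀ x : H, (∀ n : ℕ, 0 < n → x ∈ Set.range ((⇑φ)^[n])) → x = 1)
    (F : Set (Set G)) (hli : LeftInvariant F) (hlo : Lower F)
    (hadd : ∀ A B : Set G, A ∈ F → B ∈ F → A ∪ B ∈ F)
    (hinv : ∀ A : Set G, A ⊆ (H : Set G) → (A ∈ F ↔ iterImg φ 1 A ∈ F))
    (α : Ordinal) (hα : Order.IsSuccLimit α) (A : ℕ → Set G)
    (hAH : ∀ n, A n ⊆ (H : Set G))
    (hAmem : ∀ n, ∃ β < α, A n ∈ tauIter F β) :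
    (⋃ n : ℕ, iterImg φ n (A n)) ∈ tauIter F α := by
  classical
  have hUH : (⋃ n : ℕ, iterImg φ n (A n)) ⊆ (H : Set G) :=
    Set.iUnion_subset (fun n => iterImg_subset φ n (A n))
  choose β hβlt hβmem using hAmem
  have hαne : α ≠ 0 := hα.pos.ne'
  rw [mem_tau_iff F hαne]
  intro x y hxy
  have hF0 : ∅ ∈ F := tau_empty_F F hlo (β 0) (hβmem 0) hxy
  by_cases hzH : x⁻¹ * y ∈ H
  case neg =>
    refine ⟨0, hα.pos, ?_⟩
    have hemp : x • (⋃ n : ℕ, iterImg φ n (A n)) ∩ y • (⋃ n : ℕ, iterImg φ n (A n)) = ∅ := by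
      rw [Set.eq_empty_iff_forall_notMem]
      rintro g ⟨hgx, hgy⟩
      obtain ⟨u, hu, rfl⟩ := hgx
      obtain ⟨u', hu', heq⟩ := hgy
      simp only [smul_eq_mul] at heq
      apply hzH
      have h1 : x⁻¹ * (y * u') = u := by rw [heq]; group
      have h2 : x⁻¹ * y = u * u'⁻¹ := by rw [← h1]; group
      rw [h2]
      exact H.mul_mem (hUH hu) (H.inv_mem (hUH hu'))
    rw [hemp, tau_zero]
    exact hF0
  case pos =>
    have hzne : x⁻¹ * y ≠ 1 := fun h => hxy (inv_mul_eq_one.1 h)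
    have hene : (⟨x⁻¹ * y, hzH⟩ : H) ≠ 1 := by
      intro h
      exact hzne (by simpa using congrArg Subtype.val h)
    have hNex : ∃ N : ℕ, 0 < N ∧ (⟨x⁻¹ * y, hzH⟩ : H) ∉ Set.range ((⇑φ)^[N]) := by
      by_contra hcon
      push_neg at hcon
      exact hene (hexp _ (fun n hn => hcon n hn))
    obtain ⟨N, hN0, hNr⟩ := hNex
    have hBmem : ∀ n, iterImg φ n (A n) ∈ tauIter F (β n) := fun n =>
      tau_iterImg_n F hli hlo hF0 φ hinj hinv n (hAH n) (hβmem n)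
    have hBH : ∀ n, iterImg φ n (A n) ⊆ (H : Set G) := fun n => iterImg_subset φ n (A n)
    set m := (Finset.range N).sup β with hm
    have hmα : m < α := (Finset.sup_lt_iff (by simpa using hα.pos)).2 (fun j _ => hβlt j)
    set CC : Fin N × Bool → Set G := fun p => (cond p.2 x y) • iterImg φ p.1 (A p.1) with hCC
    have hCcos : ∀ p, CC p ⊆ x • (H : Set G) := by
      rintro ⟨n, b⟩
      cases b
      · show y • iterImg φ n (A n) ⊆ x • (H : Set G)
        refine (Set.smul_set_mono (hBH n)).trans ?_
        rw [show y = x * (x⁻¹ * y) by group, ← smul_smul, smul_coe_of_mem hzH]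
      · exact Set.smul_set_mono (hBH n)
    have hClev : ∀ p : Fin N × Bool, ∃ c, c ≤ m ∧ CC p ∈ tauIter F c := by
      rintro ⟨n, b⟩
      refine ⟨β n, Finset.le_sup (Finset.mem_range.2 n.isLt), ?_⟩
      cases b
      · exact tau_smul F hli y (hBmem n)
      · exact tau_smul F hli x (hBmem n)
    obtain ⟨nn, hnn⟩ := unionMem F hli hlo hadd hF0 htf m (N * 2) (by omega)
    have hcard : Fintype.card (Fin N × Bool) ≤ N * 2 := by simp [Fintype.card_prod]
    have hBig := hnn (Fin N × Bool) inferInstance CC x hcard hCcos hClev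
    refine ⟨m + nn, add_nat_lt_limit hα hmα nn, ?_⟩
    refine tau_lower F hlo _ ?_ hBig
    rintro g ⟨hgx, hgy⟩
    obtain ⟨u, hu, rfl⟩ := hgx
    obtain ⟨n, hun⟩ := Set.mem_iUnion.1 hu
    obtain ⟨u', hu', heq⟩ := hgy
    obtain ⟨n', hun'⟩ := Set.mem_iUnion.1 hu'
    by_cases hn : n < N
    · exact Set.mem_iUnion.2 ⟨(⟨n, hn⟩, true), Set.smul_mem_smul_set hun⟩
    · by_cases hn' : n' < N
      · refine Set.mem_iUnion.2 ⟨(⟨n', hn'⟩, false), ?_⟩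
        simp only [smul_eq_mul] at heq
        show x • u ∈ y • iterImg φ n' (A n')
        rw [smul_eq_mul, ← heq, ← smul_eq_mul]
        exact Set.smul_mem_smul_set hun'
      · exfalso
        push_neg at hn hn'
        obtain ⟨w, hw, rfl⟩ := hun
        obtain ⟨a, ha, rfl⟩ := hw
        obtain ⟨w', hw', rfl⟩ := hun'
        obtain ⟨b, hb, rfl⟩ := hw'
        simp only [smul_eq_mul] at heq
        have h1 : x⁻¹ * (y * (((⇑φ)^[n'] b : H) : G)) = (((⇑φ)^[n] a : H) : G) := by
          rw [heq]; group
        have hz2 : x⁻¹ * y = (((⇑φ)^[n] a : H) : G) * (((⇑φ)^[n'] b : H) : G)⁻¹ := by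
          rw [← h1]; group
        have hna : (⇑φ)^[n] a = (⇑φ)^[N] ((⇑φ)^[n - N] a) := by
          conv_lhs => rw [show n = N + (n - N) by omega]
          rw [Function.iterate_add_apply]
        have hnb : (⇑φ)^[n'] b = (⇑φ)^[N] ((⇑φ)^[n' - N] b) := by
          conv_lhs => rw [show n' = N + (n' - N) by omega]
          rw [Function.iterate_add_apply]
        apply hNr
        refine ⟨(⇑φ)^[n - N] a * ((⇑φ)^[n' - N] b)⁻¹, ?_⟩
        apply Subtype.coe_injective
        rw [iterate_map_mul_inv, ← hna, ← hnb]
        push_cast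
        rw [← hz2]
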